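/- Let a, k ∈ ℕ with a, k ≥ 1, and let K, K' be two independent random subsets of [ak], each distributed uniformly over all subsets of [ak] of size k. Then for every ε ∈ (0,1): P[|K ∩ K'| ≥ (1+ε)k/a] ≤ 2·exp(−kε²/(3a)) and P[|K ∩ K'| ≤ (1−ε)k/a] ≤ 2·exp(−kε²/(2a)). -/

import Mathlib

open Finset


lemma card_filter_superset (n k : ℕ) (S : Finset (Fin n)) (hSk : S.card ≤ k) :
    (((univ : Finset (Fin n)).powersetCard k).filter (fun K => S ⊆ K)).card
      = (n - S.card).choose (k - S.card) := by
  have hcard : ((univ : Finset (Fin n)) \ S).card = n - S.card := by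
    rw [Finset.card_sdiff_of_subset (subset_univ S), card_univ, Fintype.card_fin]
  rw [← hcard, ← Finset.card_powersetCard (k - S.card) (univ \ S)]
  · apply Finset.card_bij (fun K _ => K \ S)
    · intro K hK
      simp only [mem_filter, mem_powersetCard] at hK
      obtain ⟨⟨-, hKc⟩, hSK⟩ := hK
      rw [mem_powersetCard]
      exact ⟨sdiff_subset_sdiff (subset_univ K) (Subset.refl S),
        by rw [card_sdiff_of_subset hSK, hKc]⟩
    · intro K1 h1 K2 h2 heq
      simp only [mem_filter, mem_powersetCard] at h1 h2
      rw [← sdiff_union_of_subset h1.2, ← sdiff_union_of_subset h2.2, heq]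
    · intro T hT
      rw [mem_powersetCard] at hT
      obtain ⟨hTsub, hTc⟩ := hT
      have hdisj : Disjoint T S := (subset_sdiff.mp hTsub).2
      refine ⟨T ∪ S, ?_, ?_⟩
      · simp only [mem_filter, mem_powersetCard]
        refine ⟨⟨subset_univ _, ?_⟩, subset_union_right⟩
        rw [card_union_of_disjoint hdisj, hTc]
        omega
      · rw [union_sdiff_right, sdiff_eq_self_of_disjoint hdisj]

lemma card_filter_disjoint (n k : ℕ) (S : Finset (Fin n)) :
    (((univ : Finset (Fin n)).powersetCard k).filter (fun K => Disjoint S K)).card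
      = (n - S.card).choose k := by
  have hcard : ((univ : Finset (Fin n)) \ S).card = n - S.card := by
    rw [Finset.card_sdiff_of_subset (subset_univ S), card_univ, Fintype.card_fin]
  rw [← hcard, ← Finset.card_powersetCard k (univ \ S)]
  congr 1
  ext K
  simp only [mem_filter, mem_powersetCard, subset_sdiff]
  constructor
  · rintro ⟨⟨-, hc⟩, hd⟩
    exact ⟨⟨subset_univ K, hd.symm⟩, hc⟩
  · rintro ⟨⟨-, hd⟩, hc⟩
    exact ⟨⟨subset_univ K, hc⟩, hd.symm⟩


lemma choose_card_eq_sum (n r : ℕ) (A : Finset (Fin n)) :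
    A.card.choose r = ∑ S ∈ (univ : Finset (Fin n)).powersetCard r, (if S ⊆ A then 1 else 0) := by
  rw [← Finset.card_powersetCard r A]
  have : A.powersetCard r = ((univ : Finset (Fin n)).powersetCard r).filter (fun S => S ⊆ A) := by
    ext S
    simp only [mem_powersetCard, mem_filter]
    exact ⟨fun h => ⟨⟨subset_univ S, h.2⟩, h.1⟩, fun h => ⟨h.2, h.1.2⟩⟩
  rw [this]
  have h2 := Finset.sum_boole (R := ℕ) (fun S => S ⊆ A) ((univ : Finset (Fin n)).powersetCard r)
  rw [Nat.cast_id] at h2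
  exact h2.symm

lemma sum_pairs_choose_inter (n k r : ℕ) (hrk : r ≤ k) :
    ∑ p ∈ (((univ : Finset (Fin n)).powersetCard k) ×ˢ ((univ : Finset (Fin n)).powersetCard k)),
      ((p.1 ∩ p.2).card).choose r
    = n.choose r * ((n - r).choose (k - r))^2 := by
  have hc : ∀ p : Finset (Fin n) × Finset (Fin n),
      ((p.1 ∩ p.2).card).choose r
      = ∑ S ∈ (univ : Finset (Fin n)).powersetCard r,
          (if S ⊆ p.1 then 1 else 0) * (if S ⊆ p.2 then 1 else 0) := by
    intro p
    rw [choose_card_eq_sum]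
    refine Finset.sum_congr rfl fun S _ => ?_
    by_cases h1 : S ⊆ p.1 <;> by_cases h2 : S ⊆ p.2 <;>
      simp [h1, h2, subset_inter_iff]
  simp_rw [hc]
  rw [Finset.sum_comm]
  have hinner : ∀ S ∈ (univ : Finset (Fin n)).powersetCard r,
      (∑ p ∈ (((univ : Finset (Fin n)).powersetCard k) ×ˢ ((univ : Finset (Fin n)).powersetCard k)),
        (if S ⊆ p.1 then 1 else 0) * (if S ⊆ p.2 then 1 else 0))
      = ((n - r).choose (k - r))^2 := by
    intro S hS
    rw [mem_powersetCard] at hS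
    rw [Finset.sum_product]
    dsimp only
    refine Eq.trans (Finset.sum_mul_sum _ _ (fun x => if S ⊆ x then (1:ℕ) else 0) (fun y => if S ⊆ y then (1:ℕ) else 0)).symm ?_
    simp only [Finset.sum_boole, Nat.cast_id]
    rw [card_filter_superset n k S (hS.2.le.trans hrk), hS.2, sq]
  rw [Finset.sum_congr rfl hinner, Finset.sum_const, Finset.card_powersetCard, card_univ,
    Fintype.card_fin, smul_eq_mul]

lemma sum_pairs_choose_sdiff (n k r : ℕ) (hrk : r ≤ k) :
    ∑ p ∈ (((univ : Finset (Fin n)).powersetCard k) ×ˢ ((univ : Finset (Fin n)).powersetCard k)),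
      ((p.1 \ p.2).card).choose r
    = n.choose r * ((n - r).choose (k - r)) * ((n - r).choose k) := by
  have hc : ∀ p : Finset (Fin n) × Finset (Fin n),
      ((p.1 \ p.2).card).choose r
      = ∑ S ∈ (univ : Finset (Fin n)).powersetCard r,
          (if S ⊆ p.1 then 1 else 0) * (if Disjoint S p.2 then 1 else 0) := by
    intro p
    rw [choose_card_eq_sum]
    refine Finset.sum_congr rfl fun S _ => ?_
    by_cases h1 : S ⊆ p.1 <;> by_cases h2 : Disjoint S p.2 <;>
      simp [h1, h2, subset_sdiff]
  simp_rw [hc]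
  rw [Finset.sum_comm]
  have hinner : ∀ S ∈ (univ : Finset (Fin n)).powersetCard r,
      (∑ p ∈ (((univ : Finset (Fin n)).powersetCard k) ×ˢ ((univ : Finset (Fin n)).powersetCard k)),
        (if S ⊆ p.1 then 1 else 0) * (if Disjoint S p.2 then 1 else 0))
      = ((n - r).choose (k - r)) * ((n - r).choose k) := by
    intro S hS
    rw [mem_powersetCard] at hS
    rw [Finset.sum_product]
    dsimp only
    refine Eq.trans (Finset.sum_mul_sum _ _ (fun x => if S ⊆ x then (1:ℕ) else 0) (fun y => if Disjoint S y then (1:ℕ) else 0)).symm ?_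
    simp only [Finset.sum_boole, Nat.cast_id]
    rw [card_filter_superset n k S (hS.2.le.trans hrk), card_filter_disjoint n k S, hS.2]
  rw [Finset.sum_congr rfl hinner, Finset.sum_const, Finset.card_powersetCard, card_univ,
    Fintype.card_fin, smul_eq_mul, mul_assoc]


lemma cast_descFactorial_prod {m r : ℕ} (h : r ≤ m) :
    ((m.descFactorial r : ℕ) : ℝ) = ∏ j ∈ range r, ((m : ℝ) - j) := by
  rw [Nat.descFactorial_eq_prod_range, Nat.cast_prod]
  refine Finset.prod_congr rfl fun j hj => ?_
  rw [mem_range] at hj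
  rw [Nat.cast_sub (le_of_lt (lt_of_lt_of_le hj h))]

lemma cast_desc_factorial_eq (m r : ℕ) (h : r ≤ m) :
    ((m.descFactorial r : ℕ) : ℝ) = (m.factorial : ℝ) / ((m - r).factorial : ℝ) := by
  rw [eq_div_iff (by exact_mod_cast (m - r).factorial_ne_zero)]
  rw [← Nat.cast_mul, mul_comm, Nat.factorial_mul_descFactorial h]

lemma cast_ratio1 (n k r : ℕ) (hr : r ≤ k) (hk : k ≤ n) :
    ((n - r).choose (k - r) : ℝ) * (n.descFactorial r : ℝ)
      = (n.choose k : ℝ) * (k.descFactorial r : ℝ) := by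
  have h1 : k - r ≤ n - r := by omega
  rw [Nat.cast_choose ℝ h1, Nat.cast_choose ℝ hk,
    cast_desc_factorial_eq n r (hr.trans hk), cast_desc_factorial_eq k r hr,
    show n - r - (k - r) = n - k by omega]
  have e1 : ((n-k).factorial : ℝ) ≠ 0 := by exact_mod_cast (n-k).factorial_ne_zero
  have e2 : ((k-r).factorial : ℝ) ≠ 0 := by exact_mod_cast (k-r).factorial_ne_zero
  have e3 : ((n-r).factorial : ℝ) ≠ 0 := by exact_mod_cast (n-r).factorial_ne_zero
  have e4 : (k.factorial : ℝ) ≠ 0 := by exact_mod_cast k.factorial_ne_zero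
  field_simp

lemma cast_ratio2 (n k r : ℕ) (hrnk : r ≤ n - k) (hk : k ≤ n) :
    ((n - r).choose k : ℝ) * (n.descFactorial r : ℝ)
      = (n.choose k : ℝ) * ((n - k).descFactorial r : ℝ) := by
  have h1 : k ≤ n - r := by omega
  rw [Nat.cast_choose ℝ h1, Nat.cast_choose ℝ hk,
    cast_desc_factorial_eq n r (by omega), cast_desc_factorial_eq (n-k) r hrnk,
    show n - r - k = n - k - r by omega]
  have e1 : ((n-k).factorial : ℝ) ≠ 0 := by exact_mod_cast (n-k).factorial_ne_zero
  have e2 : ((n-k-r).factorial : ℝ) ≠ 0 := by exact_mod_cast (n-k-r).factorial_ne_zero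
  have e3 : ((n-r).factorial : ℝ) ≠ 0 := by exact_mod_cast (n-r).factorial_ne_zero
  have e4 : (k.factorial : ℝ) ≠ 0 := by exact_mod_cast k.factorial_ne_zero
  field_simp

lemma chord_two {x : ℝ} (h0 : 0 ≤ x) (h1 : x ≤ 1) :
    Real.exp (x * Real.log 2) ≤ 1 + x := by
  have hcvx := convexOn_exp.2 (Set.mem_univ (0:ℝ)) (Set.mem_univ (Real.log 2))
    (by linarith : (0:ℝ) ≤ 1 - x) h0 (by ring)
  simp only [smul_eq_mul, mul_zero, zero_add, Real.exp_zero, mul_one] at hcvx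
  rw [Real.exp_log (by norm_num : (0:ℝ) < 2)] at hcvx
  linarith [hcvx]

lemma exp_div_le (y c : ℝ) (hy : 0 ≤ y) (hyc : y ≤ c) :
    Real.exp (y / (1 + c)) ≤ 1 + y := by
  have h1y : (0:ℝ) < 1 + y := by linarith
  have h1c : (0:ℝ) < 1 + c := by linarith
  have key : Real.exp (y / (1 + y)) ≤ 1 + y := by
    have h := Real.add_one_le_exp (-(y / (1 + y)))
    have h2 : 1 - y / (1+y) = 1/(1+y) := by field_simp; ring
    rw [neg_add_eq_sub, h2] at h
    -- h : 1/(1+y) ≤ exp (-(y/(1+y)))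
    rw [Real.exp_neg] at h
    have h4 : (0:ℝ) < Real.exp (y/(1+y)) := Real.exp_pos _
    have h5 := mul_le_mul_of_nonneg_right h h4.le
    rw [inv_mul_cancel₀ (ne_of_gt h4)] at h5
    rw [div_mul_eq_mul_div, one_mul, div_le_one h1y] at h5
    exact h5
  refine le_trans (Real.exp_le_exp.mpr ?_) key
  apply div_le_div_of_nonneg_left hy h1y
  linarith

lemma polyH (s r : ℝ) (h1 : s ≤ r) (h2 : r ≤ s + 1) (h0 : 0 ≤ s) :
    s ^ 2 ≤ 2 * r * s - r * (r - 1) := by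
  nlinarith [mul_nonneg (sub_nonneg.2 h1) (by linarith : (0:ℝ) ≤ 1 - (r - s))]

lemma polyG (a k r ε : ℝ) (ha : 2 ≤ a) (hk : 1 ≤ k) (hε0 : 0 < ε) (hε1 : ε < 1)
    (h1 : ε * k ≤ r) (h2 : r ≤ ε * k + 1) :
    ε^2 * k^3 * (a - 1 + ε) ≤ 2*a*ε*k^2*r - (a-1)*k*(r*(r-1)) - r*(r-1)^2 := by
  have hu0 : 0 ≤ r - ε*k := by linarith
  have hu1 : r - ε*k ≤ 1 := by linarith
  have p1 : 0 ≤ (a-2) * (k * ((r-ε*k)*(1-(r-ε*k)) + k*ε)) := by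
    apply mul_nonneg (by linarith)
    apply mul_nonneg (by linarith)
    nlinarith [mul_nonneg hu0 (by linarith : (0:ℝ) ≤ 1 - (r - ε*k))]
  have p2 : 0 ≤ 2*k^3*ε^2*(1-ε) := by
    apply mul_nonneg (by positivity) (by linarith)
  have p3 : 0 ≤ (r-ε*k)*(1-(r-ε*k))*(k-1+(r-ε*k)) := by
    apply mul_nonneg (mul_nonneg hu0 (by linarith)) (by linarith)
  have p4 : 0 ≤ k*ε*(k-1+4*(r-ε*k)-3*(r-ε*k)^2) := by
    apply mul_nonneg (by positivity)
    nlinarith [mul_nonneg hu0 (by linarith : (0:ℝ) ≤ 1 - (r - ε*k))]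
  have p5 : 0 ≤ k^2*ε*(2*(r-ε*k)+2*ε-3*ε*(r-ε*k)) := by
    apply mul_nonneg (by positivity)
    nlinarith [mul_nonneg hu0 (by linarith : (0:ℝ) ≤ 1 - ε),
      mul_nonneg hε0.le (by linarith : (0:ℝ) ≤ 2 - (r - ε*k))]
  nlinarith [p1, p2, p3, p4, p5]


lemma polyH2 (a k r ε : ℝ) (ha : 1 ≤ a) (hk : 1 ≤ k) (hε0 : 0 < ε) (hε1 : ε < 1)
    (h1 : ε*k/a ≤ r) (h2 : r ≤ ε*k/a + 1) :
    k*ε^2/(3*a) ≤ Real.log 2 * (r*ε - r*(r-1)/2*(a/k)) := by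
  have ha0 : (0:ℝ) < a := by linarith
  have hk0 : (0:ℝ) < k := by linarith
  have hlog : (2:ℝ)/3 ≤ Real.log 2 := by
    have := Real.log_two_gt_d9; norm_num at this ⊢; linarith
  have h1' : ε*k ≤ r*a := by rw [div_le_iff₀ ha0] at h1; linarith
  have h2' : r*a ≤ ε*k + a := by
    have := mul_le_mul_of_nonneg_right h2 ha0.le
    rw [add_mul, div_mul_cancel₀ _ ha0.ne', one_mul] at this
    linarith
  have key : ε^2*k/(2*a) ≤ r*ε - r*(r-1)/2*(a/k) := by
    rw [← sub_nonneg]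
    have expand : r*ε - r*(r-1)/2*(a/k) - ε^2*k/(2*a)
        = (2*(r*a)*ε*k - a^2*(r*(r-1)) - ε^2*k^2)/(2*a*k) := by
      field_simp
    rw [expand]
    apply div_nonneg _ (by positivity)
    nlinarith [mul_nonneg (sub_nonneg.2 h1') (by linarith : (0:ℝ) ≤ ε*k + a - r*a),
      mul_pos (mul_pos hε0 hk0) ha0]
  calc k*ε^2/(3*a) = (2/3)*(ε^2*k/(2*a)) := by ring
    _ ≤ Real.log 2 * (r*ε - r*(r-1)/2*(a/k)) :=
      mul_le_mul hlog key (by positivity) (by linarith)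

set_option maxHeartbeats 1000000 in
lemma upper_tail (a k : ℕ) (ha : 1 ≤ a) (hk : 1 ≤ k) (ε : ℝ) (hε0 : 0 < ε) (hε1 : ε < 1) :
    (((((Finset.univ : Finset (Fin (a * k))).powersetCard k) ×ˢ
          ((Finset.univ : Finset (Fin (a * k))).powersetCard k)).filter
        (fun p => (1 + ε) * k / a ≤ ((p.1 ∩ p.2).card : ℝ))).card : ℝ)
      ≤ Real.exp (-((k:ℝ) * ε ^ 2) / (3 * a)) * (((a*k).choose k : ℕ) : ℝ) ^ 2 := by
  have ha1 : (1:ℝ) ≤ a := by exact_mod_cast ha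
  have hk1 : (1:ℝ) ≤ k := by exact_mod_cast hk
  have ha0 : (0:ℝ) < a := by linarith
  have hk0 : (0:ℝ) < k := by linarith
  set T : ℝ := (1 + ε) * k / a with hT
  set s : ℝ := ε * k / a with hs
  have hs0 : 0 < s := by positivity
  set r : ℕ := ⌈s⌉₊ with hr
  have hsr : s ≤ r := Nat.le_ceil s
  have hrs : (r:ℝ) < s + 1 := Nat.ceil_lt_add_one hs0.le
  have hr1 : 1 ≤ r := Nat.one_le_iff_ne_zero.mpr (by
    intro h0
    rw [hr] at h0
    have := Nat.ceil_eq_zero.mp h0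
    linarith)
  have hrk : r ≤ k := by
    rw [hr, Nat.ceil_le]
    rw [hs]
    rw [div_le_iff₀ ha0]
    nlinarith
  have hkn : k ≤ a * k := Nat.le_mul_of_pos_left k ha
  have hrn : r ≤ a * k := hrk.trans hkn
  have hnR : ((a*k : ℕ) : ℝ) = (a:ℝ) * k := by push_cast; ring
  have hTs : s < T := by rw [hT, hs]; rw [div_lt_div_iff₀ ha0 ha0] ; nlinarith
  -- positivity of T - j factors
  have hTj : ∀ j ∈ range r, 0 < T - j := by
    intro j hj
    rw [mem_range] at hj
    have : (j:ℝ) ≤ (r:ℝ) - 1 := by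
      have : (j:ℝ) + 1 ≤ r := by exact_mod_cast hj
      linarith
    linarith
  have hPT0 : 0 < ∏ j ∈ range r, (T - j) := Finset.prod_pos hTj
  -- Step 1
  have hstep1 : ((((((univ : Finset (Fin (a*k))).powersetCard k) ×ˢ
        ((univ : Finset (Fin (a*k))).powersetCard k)).filter
        (fun p => T ≤ ((p.1 ∩ p.2).card : ℝ))).card : ℝ)) * ∏ j ∈ range r, (T - j)
      ≤ ∑ p ∈ (((univ : Finset (Fin (a*k))).powersetCard k) ×ˢ
          ((univ : Finset (Fin (a*k))).powersetCard k)),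
          (((p.1 ∩ p.2).card.descFactorial r : ℕ) : ℝ) := by
    rw [← nsmul_eq_mul, ← Finset.sum_const]
    apply le_trans (Finset.sum_le_sum (fun p hp => ?_))
      (Finset.sum_le_sum_of_subset_of_nonneg (Finset.filter_subset _ _)
        (fun p _ _ => by positivity))
    rw [mem_filter] at hp
    have hpX : T ≤ ((p.1 ∩ p.2).card : ℝ) := hp.2
    have hrX : r ≤ (p.1 ∩ p.2).card := by
      have h1 : ((r:ℝ)) < ((p.1 ∩ p.2).card : ℝ) + 1 := by linarith
      exact_mod_cast Nat.lt_add_one_iff.mp (by exact_mod_cast h1)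
    rw [cast_descFactorial_prod hrX]
    apply Finset.prod_le_prod (fun j hj => (hTj j hj).le)
    intro j hj
    have : (r:ℝ) ≤ ((p.1 ∩ p.2).card : ℝ) := by exact_mod_cast hrX
    linarith [hpX]
  -- Step 2 (ℕ)
  have hstep2 : ∑ p ∈ (((univ : Finset (Fin (a*k))).powersetCard k) ×ˢ
          ((univ : Finset (Fin (a*k))).powersetCard k)),
          ((p.1 ∩ p.2).card.descFactorial r)
      = r.factorial * ((a*k).choose r * (((a*k) - r).choose (k - r))^2) := by
    simp_rw [Nat.descFactorial_eq_factorial_mul_choose]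
    rw [← Finset.mul_sum, sum_pairs_choose_inter (a*k) k r hrk]
  -- Step 3 (cast identity)
  have hstep3 : ((r.factorial * ((a*k).choose r * (((a*k) - r).choose (k - r))^2) : ℕ) : ℝ)
      = (((a*k).choose k : ℕ) : ℝ)^2 *
        ((∏ j ∈ range r, ((k:ℝ) - j))^2 / ∏ j ∈ range r, (((a*k:ℕ):ℝ) - j)) := by
    have hPN0 : 0 < ∏ j ∈ range r, (((a*k:ℕ):ℝ) - j) := by
      apply Finset.prod_pos
      intro j hj
      rw [mem_range] at hj
      have hj' : (j:ℝ) < r := by exact_mod_cast hj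
      have hrn' : (r:ℝ) ≤ ((a*k:ℕ):ℝ) := by exact_mod_cast hrn
      linarith
    have hnd : (((a*k).descFactorial r : ℕ) : ℝ) = ∏ j ∈ range r, (((a*k:ℕ):ℝ) - j) :=
      cast_descFactorial_prod hrn
    have hkd : ((k.descFactorial r : ℕ) : ℝ) = ∏ j ∈ range r, ((k:ℝ) - j) :=
      cast_descFactorial_prod hrk
    have hfc : ((r.factorial * (a*k).choose r : ℕ) : ℝ) = ∏ j ∈ range r, (((a*k:ℕ):ℝ) - j) := by
      rw [← hnd, Nat.descFactorial_eq_factorial_mul_choose]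
    have hratio := cast_ratio1 (a*k) k r hrk hkn
    rw [hnd, hkd] at hratio
    push_cast
    push_cast at hfc hratio hPN0
    rw [← mul_div_assoc, eq_div_iff hPN0.ne']
    linear_combination ((((a*k - r).choose (k-r) : ℝ))^2 * (∏ x ∈ range r, ((a:ℝ)*k - x))) * hfc
      + (((a*k - r).choose (k-r) : ℝ) * (∏ x ∈ range r, ((a:ℝ)*k - x))
        + (((a*k).choose k : ℕ) : ℝ) * (∏ j ∈ range r, ((k:ℝ) - j))) * hratio
  -- denominator positivity
  have hden : ∀ j ∈ range r, (0:ℝ) < (a:ℝ)*k - j := by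
    intro j hj
    rw [mem_range] at hj
    have hj' : (j:ℝ) < r := by exact_mod_cast hj
    have : (r:ℝ) ≤ (a:ℝ)*k := by
      rw [← hnR]; exact_mod_cast hrn
    linarith
  -- Step 4: per-factor bound
  have hfac : ∀ j ∈ range r, ((k:ℝ) - j)^2 / ((a:ℝ)*k - j)
      ≤ (T - j) * Real.exp (-((ε - j*(a:ℝ)/k) * Real.log 2)) := by
    intro j hj
    have hnj := hden j hj
    rw [mem_range] at hj
    have hj1 : (j:ℝ) ≤ (r:ℝ) - 1 := by
      have : (j:ℝ) + 1 ≤ r := by exact_mod_cast hj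
      linarith
    have hjs : (j:ℝ) < s := by linarith
    have hjk : (j:ℝ) ≤ (k:ℝ) - 1 := by
      have : (j:ℝ) + 1 ≤ k := by exact_mod_cast hj.trans_le hrk
      linarith
    have hx0 : 0 ≤ ε - (j:ℝ)*a/k := by
      rw [sub_nonneg, div_le_iff₀ hk0]
      rw [hs] at hjs
      have := (lt_div_iff₀ ha0).mp hjs
      linarith
    have hx1 : ε - (j:ℝ)*a/k ≤ 1 := by
      have : 0 ≤ (j:ℝ)*a/k := by positivity
      linarith
    have h1 : ((k:ℝ) - j)^2 / ((a:ℝ)*k - j) ≤ (k:ℝ)/a := by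
      rw [div_le_div_iff₀ hnj ha0]
      nlinarith [mul_nonneg (mul_nonneg ha0.le (Nat.cast_nonneg j : (0:ℝ) ≤ j))
          (by linarith : (0:ℝ) ≤ (k:ℝ) - j),
        mul_nonneg (mul_nonneg hk0.le (Nat.cast_nonneg j : (0:ℝ) ≤ j))
          (by linarith : (0:ℝ) ≤ (a:ℝ) - 1)]
    have hchord := chord_two hx0 hx1
    have h2 : (k:ℝ)/a * (1 + (ε - (j:ℝ)*a/k)) = T - j := by
      rw [hT]; field_simp; ring
    have h3 : (k:ℝ)/a * Real.exp ((ε - (j:ℝ)*a/k) * Real.log 2) ≤ T - j := by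
      rw [← h2]
      exact mul_le_mul_of_nonneg_left hchord (by positivity)
    have h4 : (k:ℝ)/a ≤ (T - j) * Real.exp (-((ε - (j:ℝ)*a/k) * Real.log 2)) := by
      have h5 := mul_le_mul_of_nonneg_right h3
        (Real.exp_pos (-((ε - (j:ℝ)*a/k) * Real.log 2))).le
      rw [mul_assoc, ← Real.exp_add, add_neg_cancel, Real.exp_zero, mul_one] at h5
      exact h5
    exact h1.trans h4
  -- Gauss sum
  have hgauss : (∑ j ∈ range r, (j:ℝ)) = r*((r:ℝ)-1)/2 := by
    have h := Finset.sum_range_id_mul_two r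
    have h' : ((∑ i ∈ range r, i : ℕ) : ℝ) * 2 = (r:ℝ) * ((r:ℝ) - 1) := by
      rw [← Nat.cast_ofNat, ← Nat.cast_mul, h, Nat.cast_mul, Nat.cast_sub hr1, Nat.cast_one]
    push_cast at h'
    linarith
  have hsumx : (∑ j ∈ range r, (ε - (j:ℝ)*a/k)) = r*ε - r*((r:ℝ)-1)/2*((a:ℝ)/k) := by
    rw [Finset.sum_sub_distrib, Finset.sum_const, card_range, nsmul_eq_mul]
    simp_rw [mul_div_assoc]
    rw [← Finset.sum_mul, hgauss]
    ring
  have hpoly : (k:ℝ)*ε^2/(3*a) ≤ Real.log 2 * (r*ε - r*((r:ℝ)-1)/2*((a:ℝ)/k)) := by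
    apply polyH2 (a:ℝ) (k:ℝ) (r:ℝ) ε ha1 hk1 hε0 hε1
    · rw [← hs]; exact hsr
    · rw [← hs]; linarith
  -- product bound
  have hprod : ∏ j ∈ range r, (((k:ℝ) - j)^2 / ((a:ℝ)*k - j))
      ≤ Real.exp (-((k:ℝ)*ε^2)/(3*a)) * ∏ j ∈ range r, (T - j) := by
    calc ∏ j ∈ range r, (((k:ℝ) - j)^2 / ((a:ℝ)*k - j))
        ≤ ∏ j ∈ range r, ((T - j) * Real.exp (-((ε - (j:ℝ)*a/k) * Real.log 2))) := by
          apply Finset.prod_le_prod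
          · intro j hj
            exact div_nonneg (sq_nonneg _) (hden j hj).le
          · exact hfac
      _ = (∏ j ∈ range r, (T - j)) *
            Real.exp (∑ j ∈ range r, -((ε - (j:ℝ)*a/k) * Real.log 2)) := by
          rw [Finset.prod_mul_distrib, Real.exp_sum]
      _ ≤ (∏ j ∈ range r, (T - j)) * Real.exp (-((k:ℝ)*ε^2)/(3*a)) := by
          apply mul_le_mul_of_nonneg_left _ hPT0.le
          apply Real.exp_le_exp.mpr
          have : (∑ j ∈ range r, -((ε - (j:ℝ)*a/k) * Real.log 2))
              = -(Real.log 2 * (r*ε - r*((r:ℝ)-1)/2*((a:ℝ)/k))) := by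
            rw [Finset.sum_neg_distrib, ← Finset.sum_mul, hsumx]; ring
          rw [this]
          rw [neg_div]
          exact neg_le_neg hpoly
      _ = Real.exp (-((k:ℝ)*ε^2)/(3*a)) * ∏ j ∈ range r, (T - j) := mul_comm _ _
  -- Assemble
  have hsplit : ∏ j ∈ range r, (((k:ℝ) - j)^2 / ((a:ℝ)*k - j))
      = (∏ j ∈ range r, ((k:ℝ) - j))^2 / ∏ j ∈ range r, ((a:ℝ)*k - j) := by
    rw [Finset.prod_div_distrib, Finset.prod_pow]
  push_cast at hstep3
  have hchain : ((((((univ : Finset (Fin (a*k))).powersetCard k) ×ˢ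
        ((univ : Finset (Fin (a*k))).powersetCard k)).filter
        (fun p => T ≤ ((p.1 ∩ p.2).card : ℝ))).card : ℝ)) * ∏ j ∈ range r, (T - j)
      ≤ (((a*k).choose k : ℕ) : ℝ)^2 * (Real.exp (-((k:ℝ)*ε^2)/(3*a)) * ∏ j ∈ range r, (T - j)) := by
    refine hstep1.trans ?_
    have hcast2 : (∑ p ∈ (((univ : Finset (Fin (a*k))).powersetCard k) ×ˢ
          ((univ : Finset (Fin (a*k))).powersetCard k)),
          (((p.1 ∩ p.2).card.descFactorial r : ℕ) : ℝ))
        = ((r.factorial * ((a*k).choose r * (((a*k) - r).choose (k - r))^2) : ℕ) : ℝ) := by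
      rw [← hstep2]; push_cast; rfl
    rw [hcast2]
    push_cast
    rw [hstep3, ← hsplit]
    apply mul_le_mul_of_nonneg_left hprod (by positivity)
  have hchain2 : ((((((univ : Finset (Fin (a*k))).powersetCard k) ×ˢ
        ((univ : Finset (Fin (a*k))).powersetCard k)).filter
        (fun p => T ≤ ((p.1 ∩ p.2).card : ℝ))).card : ℝ)) * ∏ j ∈ range r, (T - j)
      ≤ ((((a*k).choose k : ℕ) : ℝ)^2 * Real.exp (-((k:ℝ)*ε^2)/(3*a))) * ∏ j ∈ range r, (T - j) := by
    refine hchain.trans (le_of_eq ?_)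
    ring
  have hfinal := le_of_mul_le_mul_right hchain2 hPT0
  calc ((((((univ : Finset (Fin (a*k))).powersetCard k) ×ˢ
        ((univ : Finset (Fin (a*k))).powersetCard k)).filter
        (fun p => T ≤ ((p.1 ∩ p.2).card : ℝ))).card : ℝ))
      ≤ (((a*k).choose k : ℕ) : ℝ)^2 * Real.exp (-((k:ℝ)*ε^2)/(3*a)) := hfinal
    _ = Real.exp (-((k:ℝ)*ε^2)/(3*a)) * (((a*k).choose k : ℕ) : ℝ)^2 := mul_comm _ _


lemma exp_div_le' (z ν s : ℝ) (hν : 0 < ν) (hz : 0 ≤ z) (hzs : z ≤ s) :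
    Real.exp (z/(ν+s)) ≤ 1 + z/ν := by
  have hsν : 0 ≤ s := hz.trans hzs
  have hdiv : z/ν ≤ s/ν := by gcongr
  have h := exp_div_le (z/ν) (s/ν) (by positivity) hdiv
  have he : z / ν / (1 + s/ν) = z/(ν+s) := by
    rw [div_div]
    congr 1
    field_simp
  rwa [he] at h

set_option maxHeartbeats 1600000 in
lemma lower_tail (a k : ℕ) (ha : 2 ≤ a) (hk : 1 ≤ k) (ε : ℝ) (hε0 : 0 < ε) (hε1 : ε < 1) :
    (((((Finset.univ : Finset (Fin (a * k))).powersetCard k) ×ˢ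
          ((Finset.univ : Finset (Fin (a * k))).powersetCard k)).filter
        (fun p => ((p.1 ∩ p.2).card : ℝ) ≤ (1 - ε) * k / a)).card : ℝ)
      ≤ Real.exp (-((k:ℝ) * ε ^ 2) / (2 * a)) * (((a*k).choose k : ℕ) : ℝ) ^ 2 := by
  have ha1 : (2:ℝ) ≤ a := by exact_mod_cast ha
  have hk1 : (1:ℝ) ≤ k := by exact_mod_cast hk
  have ha0 : (0:ℝ) < a := by linarith
  have hk0 : (0:ℝ) < k := by linarith
  set T : ℝ := ((a:ℝ) - 1 + ε) * k / a with hT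
  set r : ℕ := ⌈ε * (k:ℝ)⌉₊ with hr
  have hsr : ε * k ≤ r := Nat.le_ceil _
  have hrs : (r:ℝ) ≤ ε * k + 1 := le_of_lt (Nat.ceil_lt_add_one (by positivity))
  have hr1 : 1 ≤ r := by
    rw [hr, Nat.one_le_ceil_iff]
    positivity
  have hrk : r ≤ k := by
    rw [hr, Nat.ceil_le]
    nlinarith
  have hkn : k ≤ a * k := Nat.le_mul_of_pos_left k (by omega)
  have hrn : r ≤ a * k := hrk.trans hkn
  have hrnk : r ≤ a * k - k := by
    have : k ≤ a*k - k := by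
      have h2 : 2*k ≤ a*k := Nat.mul_le_mul_right k ha
      omega
    exact hrk.trans this
  have hnkR : ((a*k - k : ℕ) : ℝ) = ((a:ℝ) - 1) * k := by
    rw [Nat.cast_sub hkn]; push_cast; ring
  have hν0 : (0:ℝ) < ((a:ℝ)-1)*k/a := by
    apply div_pos (by nlinarith) ha0
  -- T - j positivity
  have hTj : ∀ j ∈ range r, 0 < T - j := by
    intro j hj
    rw [mem_range] at hj
    have hj' : (j:ℝ) ≤ (r:ℝ) - 1 := by
      have : (j:ℝ) + 1 ≤ r := by exact_mod_cast hj
      linarith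
    have hjek : (j:ℝ) ≤ ε * k := by linarith
    have : ε * k < T := by
      rw [hT, lt_div_iff₀ ha0]
      nlinarith [mul_pos (mul_pos (by linarith : (0:ℝ) < 1-ε) (by linarith : (0:ℝ) < (a:ℝ)-1)) hk0]
    linarith
  have hPT0 : 0 < ∏ j ∈ range r, (T - j) := Finset.prod_pos hTj
  -- Step 1
  have hstep1 : ((((((univ : Finset (Fin (a*k))).powersetCard k) ×ˢ
        ((univ : Finset (Fin (a*k))).powersetCard k)).filter
        (fun p => ((p.1 ∩ p.2).card : ℝ) ≤ (1 - ε) * k / a)).card : ℝ)) * ∏ j ∈ range r, (T - j)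
      ≤ ∑ p ∈ (((univ : Finset (Fin (a*k))).powersetCard k) ×ˢ
          ((univ : Finset (Fin (a*k))).powersetCard k)),
          (((p.1 \ p.2).card.descFactorial r : ℕ) : ℝ) := by
    rw [← nsmul_eq_mul, ← Finset.sum_const]
    apply le_trans (Finset.sum_le_sum (fun p hp => ?_))
      (Finset.sum_le_sum_of_subset_of_nonneg (Finset.filter_subset _ _)
        (fun p _ _ => by positivity))
    rw [mem_filter] at hp
    have hp1k : p.1.card = k := (Finset.mem_powersetCard.mp (Finset.mem_product.mp hp.1).1).2
    have hYX : (p.1 \ p.2).card + (p.1 ∩ p.2).card = k := by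
      rw [Finset.card_sdiff_add_card_inter, hp1k]
    have hYR : T ≤ ((p.1 \ p.2).card : ℝ) := by
      have hXc : ((p.1 ∩ p.2).card : ℝ) ≤ (1 - ε) * k / a := hp.2
      have hYc : ((p.1 \ p.2).card : ℝ) = (k:ℝ) - ((p.1 ∩ p.2).card : ℝ) := by
        have := congrArg (fun m : ℕ => (m : ℝ)) hYX
        push_cast at this
        linarith
      rw [hYc, hT]
      rw [le_div_iff₀ ha0] at hXc
      rw [div_le_iff₀ ha0]
      nlinarith
    have hrY : r ≤ (p.1 \ p.2).card := by
      have hTr : ((r:ℝ)) - 1 < T := by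
        have h1 : ε * k < T := by
          rw [hT, lt_div_iff₀ ha0]
          nlinarith [mul_pos (mul_pos (by linarith : (0:ℝ) < 1-ε) (by linarith : (0:ℝ) < (a:ℝ)-1)) hk0]
        linarith
      have h1 : ((r:ℝ)) < ((p.1 \ p.2).card : ℝ) + 1 := by linarith
      exact_mod_cast Nat.lt_add_one_iff.mp (by exact_mod_cast h1)
    rw [cast_descFactorial_prod hrY]
    apply Finset.prod_le_prod (fun j hj => (hTj j hj).le)
    intro j hj
    have : (r:ℝ) ≤ ((p.1 \ p.2).card : ℝ) := by exact_mod_cast hrY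
    linarith
  -- Step 2
  have hstep2 : ∑ p ∈ (((univ : Finset (Fin (a*k))).powersetCard k) ×ˢ
          ((univ : Finset (Fin (a*k))).powersetCard k)),
          ((p.1 \ p.2).card.descFactorial r)
      = r.factorial * ((a*k).choose r * (((a*k) - r).choose (k - r)) * (((a*k) - r).choose k)) := by
    simp_rw [Nat.descFactorial_eq_factorial_mul_choose]
    rw [← Finset.mul_sum, sum_pairs_choose_sdiff (a*k) k r hrk, mul_assoc]
  -- Step 3
  have hPN0 : 0 < ∏ j ∈ range r, ((a:ℝ)*(k:ℝ) - j) := by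
    apply Finset.prod_pos
    intro j hj
    rw [mem_range] at hj
    have hj' : (j:ℝ) < r := by exact_mod_cast hj
    have hrn' : (r:ℝ) ≤ (a:ℝ)*k := by
      have : ((r:ℕ):ℝ) ≤ ((a*k:ℕ):ℝ) := by exact_mod_cast hrn
      push_cast at this; linarith
    linarith
  have hstep3 : ((r.factorial * ((a*k).choose r * (((a*k) - r).choose (k - r)) * (((a*k) - r).choose k)) : ℕ) : ℝ)
      = (((a*k).choose k : ℕ) : ℝ)^2 *
        ((∏ j ∈ range r, ((k:ℝ) - j)) * (∏ j ∈ range r, (((a:ℝ)-1)*k - j)) / ∏ j ∈ range r, ((a:ℝ)*k - j)) := by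
    have hnd := cast_descFactorial_prod hrn
    have hkd := cast_descFactorial_prod hrk
    have hmd := cast_descFactorial_prod hrnk
    have hfc : ((r.factorial * (a*k).choose r : ℕ) : ℝ) = ∏ j ∈ range r, (((a*k:ℕ):ℝ) - j) := by
      rw [← hnd, Nat.descFactorial_eq_factorial_mul_choose]
    have hratio1 := cast_ratio1 (a*k) k r hrk hkn
    have hratio2 := cast_ratio2 (a*k) k r hrnk hkn
    have hmd' : (((a*k - k).descFactorial r : ℕ) : ℝ) = ∏ j ∈ range r, (((a:ℝ)-1)*k - j) := by
      rw [hmd]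
      exact Finset.prod_congr rfl fun j _ => by rw [hnkR]
    rw [hnd, hkd] at hratio1
    rw [hnd, hmd'] at hratio2
    push_cast at hfc hratio1 hratio2 ⊢
    rw [← mul_div_assoc, eq_div_iff hPN0.ne']
    linear_combination ((((a*k - r).choose (k-r) : ℕ):ℝ) * (((a*k - r).choose k : ℕ):ℝ)
        * (∏ x ∈ range r, ((a:ℝ)*k - x))) * hfc
      + ((((a*k - r).choose k : ℕ):ℝ) * (∏ x ∈ range r, ((a:ℝ)*k - x))) * hratio1
      + ((((a*k).choose k : ℕ):ℝ) * (∏ j ∈ range r, ((k:ℝ) - j))) * hratio2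
  have hT0 : 0 < T := by
    have h0r : 0 ∈ range r := mem_range.mpr hr1
    have := hTj 0 h0r
    simpa using this
  have hden : ∀ j ∈ range r, (0:ℝ) < (a:ℝ)*k - j := by
    intro j hj
    rw [mem_range] at hj
    have hj' : (j:ℝ) < r := by exact_mod_cast hj
    have hrn' : (r:ℝ) ≤ (a:ℝ)*k := by
      have : ((r:ℕ):ℝ) ≤ ((a*k:ℕ):ℝ) := by exact_mod_cast hrn
      push_cast at this; linarith
    linarith
  -- step 4: per factor bound
  have hfac : ∀ j ∈ range r,
      ((k:ℝ) - j) * (((a:ℝ)-1)*k - j) / ((a:ℝ)*k - j)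
      ≤ (T - j) * Real.exp (-((ε*k/a - ((a:ℝ)-1)/(a:ℝ)^2*j - (j:ℝ)*(((r:ℝ)-1)/((a:ℝ)^2*k))) / T)) := by
    intro j hj
    have hnj := hden j hj
    have hTjj := hTj j hj
    rw [mem_range] at hj
    have hj0 : (0:ℝ) ≤ j := Nat.cast_nonneg j
    have hj1 : (j:ℝ) ≤ (r:ℝ) - 1 := by
      have : (j:ℝ) + 1 ≤ r := by exact_mod_cast hj
      linarith
    have hjek : (j:ℝ) ≤ ε*k := by linarith
    have hjk1 : (j:ℝ) ≤ (k:ℝ) - 1 := by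
      have : (j:ℝ) + 1 ≤ k := by exact_mod_cast hj.trans_le hrk
      linarith
    set z : ℝ := ε*k/a - ((a:ℝ)-1)/(a:ℝ)^2*j - (j:ℝ)*(((r:ℝ)-1)/((a:ℝ)^2*k)) with hz
    set G : ℝ := ((a:ℝ)-1)*k/a - ((a:ℝ)^2-a+1)/(a:ℝ)^2*j + (j:ℝ)*(((r:ℝ)-1)/((a:ℝ)^2*k)) with hG
    clear_value z G
    have hz0 : 0 ≤ z := by
      have hzeq : z = (ε*a*k^2 - ((a:ℝ)-1)*k*j - (j:ℝ)*((r:ℝ)-1))/((a:ℝ)^2*k) := by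
        rw [hz]; field_simp
      rw [hzeq]
      apply div_nonneg _ (by positivity)
      nlinarith [mul_le_mul_of_nonneg_left hjek (by nlinarith : (0:ℝ) ≤ ((a:ℝ)-1)*k),
        mul_le_mul hjek (by linarith : (r:ℝ)-1 ≤ ε*k) (by linarith) (by positivity)]
    have hzs : z ≤ ε*k/a := by
      have h2 : (0:ℝ) ≤ ((a:ℝ)-1)/(a:ℝ)^2*j :=
        mul_nonneg (div_nonneg (by linarith) (by positivity)) hj0
      have h3 : (0:ℝ) ≤ (j:ℝ)*(((r:ℝ)-1)/((a:ℝ)^2*k)) := by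
        apply mul_nonneg hj0
        apply div_nonneg _ (by positivity)
        have : (1:ℝ) ≤ r := by exact_mod_cast hr1
        linarith
      rw [hz]; linarith
    have hgG : ((k:ℝ) - j) * (((a:ℝ)-1)*k - j) / ((a:ℝ)*k - j) ≤ G := by
      have hGeq : G = ((a:ℝ)*((a:ℝ)-1)*k^2 - ((a:ℝ)^2-a+1)*k*j + (j:ℝ)*((r:ℝ)-1))/((a:ℝ)^2*k) := by
        rw [hG]; field_simp
      rw [div_le_iff₀ hnj, hGeq, div_mul_eq_mul_div, le_div_iff₀ (by positivity : (0:ℝ) < (a:ℝ)^2*k)]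
      nlinarith [mul_nonneg (mul_nonneg hj0 (by nlinarith : (0:ℝ) ≤ ((a:ℝ)-1)*k))
          (by linarith : (0:ℝ) ≤ (r:ℝ)-1-j),
        mul_nonneg (mul_nonneg hj0 (by linarith : (0:ℝ) ≤ (r:ℝ)-1))
          (by linarith : (0:ℝ) ≤ (k:ℝ)-j)]
    have hGν : G ≤ ((a:ℝ)-1)*k/a := by
      have hGdiff : ((a:ℝ)-1)*k/a - G = (j:ℝ)*((((a:ℝ)^2-a+1)*k - ((r:ℝ)-1))/((a:ℝ)^2*k)) := by
        rw [hG]; field_simp; ring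
      have hrkR : (r:ℝ) ≤ k := by exact_mod_cast hrk
      nlinarith [mul_nonneg hj0 (div_nonneg (by nlinarith : (0:ℝ) ≤ ((a:ℝ)^2-a+1)*k - ((r:ℝ)-1))
        (by positivity : (0:ℝ) ≤ (a:ℝ)^2*k))]
    have hg0 : (0:ℝ) ≤ ((k:ℝ) - j) * (((a:ℝ)-1)*k - j) / ((a:ℝ)*k - j) := by
      apply div_nonneg _ hnj.le
      apply mul_nonneg (by linarith)
      nlinarith
    have hGz : G + z = T - j := by
      rw [hG, hz, hT]; field_simp; ring
    have hνT : ((a:ℝ)-1)*k/a + ε*k/a = T := by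
      rw [hT]; field_simp
    have hexpz : Real.exp (z/T) ≤ 1 + z/(((a:ℝ)-1)*k/a) := by
      have := exp_div_le' z (((a:ℝ)-1)*k/a) (ε*k/a) hν0 hz0 hzs
      rwa [hνT] at this
    have hzν0 : 0 ≤ z/(((a:ℝ)-1)*k/a) := div_nonneg hz0 hν0.le
    have hmain : (((k:ℝ) - j) * (((a:ℝ)-1)*k - j) / ((a:ℝ)*k - j)) * (1 + z/(((a:ℝ)-1)*k/a))
        ≤ T - j := by
      have h1 : (((k:ℝ) - j) * (((a:ℝ)-1)*k - j) / ((a:ℝ)*k - j)) * (1 + z/(((a:ℝ)-1)*k/a))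
          ≤ G * (1 + z/(((a:ℝ)-1)*k/a)) :=
        mul_le_mul_of_nonneg_right hgG (by linarith)
      have hGzν : G*(z/(((a:ℝ)-1)*k/a)) ≤ z := by
        calc G*(z/(((a:ℝ)-1)*k/a)) ≤ (((a:ℝ)-1)*k/a)*(z/(((a:ℝ)-1)*k/a)) :=
              mul_le_mul_of_nonneg_right hGν hzν0
          _ = z := by rw [mul_comm, div_mul_cancel₀ _ (ne_of_gt hν0)]
      have h2 : G * (1 + z/(((a:ℝ)-1)*k/a)) ≤ T - j := by
        have hexpand : G * (1 + z/(((a:ℝ)-1)*k/a)) = G + G*(z/(((a:ℝ)-1)*k/a)) := by ring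
        rw [hexpand]
        linarith [hGz]
      exact h1.trans h2
    have hfrac : (((k:ℝ) - j) * (((a:ℝ)-1)*k - j) / ((a:ℝ)*k - j))
        ≤ (T - j) * (1 + z/(((a:ℝ)-1)*k/a))⁻¹ := by
      rw [← div_eq_mul_inv, le_div_iff₀ (by linarith : (0:ℝ) < 1 + z/(((a:ℝ)-1)*k/a))]
      exact hmain
    refine hfrac.trans (mul_le_mul_of_nonneg_left ?_ hTjj.le)
    rw [Real.exp_neg]
    exact inv_anti₀ (Real.exp_pos _) hexpz
  -- gauss sum
  have hgauss : (∑ j ∈ range r, (j:ℝ)) = r*((r:ℝ)-1)/2 := by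
    have h := Finset.sum_range_id_mul_two r
    have h' : ((∑ i ∈ range r, i : ℕ) : ℝ) * 2 = (r:ℝ) * ((r:ℝ) - 1) := by
      rw [← Nat.cast_ofNat, ← Nat.cast_mul, h, Nat.cast_mul, Nat.cast_sub hr1, Nat.cast_one]
    push_cast at h'
    linarith
  have hsumz : (∑ j ∈ range r, (ε*k/a - ((a:ℝ)-1)/(a:ℝ)^2*j - (j:ℝ)*(((r:ℝ)-1)/((a:ℝ)^2*k))))
      = r*(ε*k/a) - ((a:ℝ)-1)/(a:ℝ)^2*(r*((r:ℝ)-1)/2)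
        - (r*((r:ℝ)-1)/2)*(((r:ℝ)-1)/((a:ℝ)^2*k)) := by
    rw [Finset.sum_sub_distrib, Finset.sum_sub_distrib, Finset.sum_const, card_range,
      nsmul_eq_mul, ← Finset.mul_sum, ← Finset.sum_mul, hgauss]
  have hpolyfinal : T * ((k:ℝ)*ε^2/(2*a)) ≤ r*(ε*k/a) - ((a:ℝ)-1)/(a:ℝ)^2*(r*((r:ℝ)-1)/2)
        - (r*((r:ℝ)-1)/2)*(((r:ℝ)-1)/((a:ℝ)^2*k)) := by
    have hG2 := polyG (a:ℝ) (k:ℝ) (r:ℝ) ε ha1 hk1 hε0 hε1 hsr hrs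
    rw [← sub_nonneg]
    have hdiff : r*(ε*k/a) - ((a:ℝ)-1)/(a:ℝ)^2*(r*((r:ℝ)-1)/2)
        - (r*((r:ℝ)-1)/2)*(((r:ℝ)-1)/((a:ℝ)^2*k)) - T * ((k:ℝ)*ε^2/(2*a))
        = (2*a*ε*(k:ℝ)^2*r - ((a:ℝ)-1)*k*((r:ℝ)*((r:ℝ)-1)) - r*((r:ℝ)-1)^2
            - ε^2*(k:ℝ)^3*((a:ℝ)-1+ε))/(2*(a:ℝ)^2*k) := by
      rw [hT]; field_simp
    rw [hdiff]
    apply div_nonneg _ (by positivity)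
    linarith
  -- product bound
  have hprod : ∏ j ∈ range r, (((k:ℝ) - j) * (((a:ℝ)-1)*k - j) / ((a:ℝ)*k - j))
      ≤ Real.exp (-((k:ℝ)*ε^2)/(2*a)) * ∏ j ∈ range r, (T - j) := by
    calc ∏ j ∈ range r, (((k:ℝ) - j) * (((a:ℝ)-1)*k - j) / ((a:ℝ)*k - j))
        ≤ ∏ j ∈ range r, ((T - j) *
            Real.exp (-((ε*k/a - ((a:ℝ)-1)/(a:ℝ)^2*j - (j:ℝ)*(((r:ℝ)-1)/((a:ℝ)^2*k))) / T))) := by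
          apply Finset.prod_le_prod _ hfac
          intro j hj
          have hnj := hden j hj
          rw [mem_range] at hj
          have hjk1 : (j:ℝ) ≤ (k:ℝ) - 1 := by
            have : (j:ℝ) + 1 ≤ k := by exact_mod_cast hj.trans_le hrk
            linarith
          apply div_nonneg _ hnj.le
          apply mul_nonneg (by linarith)
          nlinarith
      _ = (∏ j ∈ range r, (T - j)) *
            Real.exp (∑ j ∈ range r,
              -((ε*k/a - ((a:ℝ)-1)/(a:ℝ)^2*j - (j:ℝ)*(((r:ℝ)-1)/((a:ℝ)^2*k))) / T)) := by
          rw [Finset.prod_mul_distrib, Real.exp_sum]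
      _ ≤ (∏ j ∈ range r, (T - j)) * Real.exp (-((k:ℝ)*ε^2)/(2*a)) := by
          apply mul_le_mul_of_nonneg_left _ hPT0.le
          apply Real.exp_le_exp.mpr
          have heq : (∑ j ∈ range r,
              -((ε*k/a - ((a:ℝ)-1)/(a:ℝ)^2*j - (j:ℝ)*(((r:ℝ)-1)/((a:ℝ)^2*k))) / T))
              = -((∑ j ∈ range r, (ε*k/a - ((a:ℝ)-1)/(a:ℝ)^2*j
                  - (j:ℝ)*(((r:ℝ)-1)/((a:ℝ)^2*k)))) / T) := by
            rw [Finset.sum_neg_distrib, ← Finset.sum_div]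
          rw [heq, hsumz, neg_div, neg_le_neg_iff]
          rw [le_div_iff₀ hT0]
          calc (k:ℝ)*ε^2/(2*a) * T = T * ((k:ℝ)*ε^2/(2*a)) := mul_comm _ _
            _ ≤ _ := hpolyfinal
      _ = Real.exp (-((k:ℝ)*ε^2)/(2*a)) * ∏ j ∈ range r, (T - j) := mul_comm _ _
  -- assemble
  have hsplit : ∏ j ∈ range r, (((k:ℝ) - j) * (((a:ℝ)-1)*k - j) / ((a:ℝ)*k - j))
      = (∏ j ∈ range r, ((k:ℝ) - j)) * (∏ j ∈ range r, (((a:ℝ)-1)*k - j))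
        / ∏ j ∈ range r, ((a:ℝ)*k - j) := by
    rw [Finset.prod_div_distrib, Finset.prod_mul_distrib]
  have hchain : ((((((univ : Finset (Fin (a*k))).powersetCard k) ×ˢ
        ((univ : Finset (Fin (a*k))).powersetCard k)).filter
        (fun p => ((p.1 ∩ p.2).card : ℝ) ≤ (1 - ε) * k / a)).card : ℝ)) * ∏ j ∈ range r, (T - j)
      ≤ ((((a*k).choose k : ℕ) : ℝ)^2 * Real.exp (-((k:ℝ)*ε^2)/(2*a))) * ∏ j ∈ range r, (T - j) := by
    refine hstep1.trans ?_
    have hcast2 : (∑ p ∈ (((univ : Finset (Fin (a*k))).powersetCard k) ×ˢ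
          ((univ : Finset (Fin (a*k))).powersetCard k)),
          (((p.1 \ p.2).card.descFactorial r : ℕ) : ℝ))
        = ((r.factorial * ((a*k).choose r * (((a*k) - r).choose (k - r)) * (((a*k) - r).choose k)) : ℕ) : ℝ) := by
      rw [← hstep2]; push_cast; rfl
    rw [hcast2, hstep3, ← hsplit]
    calc (((a*k).choose k : ℕ) : ℝ)^2 * ∏ j ∈ range r, (((k:ℝ) - j) * (((a:ℝ)-1)*k - j) / ((a:ℝ)*k - j))
        ≤ (((a*k).choose k : ℕ) : ℝ)^2 * (Real.exp (-((k:ℝ)*ε^2)/(2*a)) * ∏ j ∈ range r, (T - j)) :=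
          mul_le_mul_of_nonneg_left hprod (by positivity)
      _ = ((((a*k).choose k : ℕ) : ℝ)^2 * Real.exp (-((k:ℝ)*ε^2)/(2*a))) * ∏ j ∈ range r, (T - j) := by
          ring
  have hfinal := le_of_mul_le_mul_right hchain hPT0
  calc ((((((univ : Finset (Fin (a*k))).powersetCard k) ×ˢ
        ((univ : Finset (Fin (a*k))).powersetCard k)).filter
        (fun p => ((p.1 ∩ p.2).card : ℝ) ≤ (1 - ε) * k / a)).card : ℝ))
      ≤ (((a*k).choose k : ℕ) : ℝ)^2 * Real.exp (-((k:ℝ)*ε^2)/(2*a)) := hfinal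
    _ = Real.exp (-((k:ℝ)*ε^2)/(2*a)) * (((a*k).choose k : ℕ) : ℝ)^2 := mul_comm _ _


/-- For `K, K'` independent uniformly random `k`-element subsets of `[ak]`,
`P[|K ∩ K'| ≥ (1+ε)k/a] ≤ 2·exp(−kε²/(3a))` and `P[|K ∩ K'| ≤ (1−ε)k/a] ≤ 2·exp(−kε²/(2a))`.
The probabilities are expressed by counting pairs of `k`-subsets. -/
theorem stmt_5 (a k : ℕ) (ha : 1 ≤ a) (hk : 1 ≤ k) (ε : ℝ) (hε : ε ∈ Set.Ioo (0 : ℝ) 1) :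
    (((((Finset.univ : Finset (Fin (a * k))).powersetCard k) ×ˢ
          ((Finset.univ : Finset (Fin (a * k))).powersetCard k)).filter
        (fun p => (1 + ε) * k / a ≤ ((p.1 ∩ p.2).card : ℝ))).card
      ≤ 2 * Real.exp (-(k * ε ^ 2) / (3 * a)) *
          (((Finset.univ : Finset (Fin (a * k))).powersetCard k).card : ℝ) ^ 2) ∧
    (((((Finset.univ : Finset (Fin (a * k))).powersetCard k) ×ˢ
          ((Finset.univ : Finset (Fin (a * k))).powersetCard k)).filter
        (fun p => ((p.1 ∩ p.2).card : ℝ) ≤ (1 - ε) * k / a)).card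
      ≤ 2 * Real.exp (-(k * ε ^ 2) / (2 * a)) *
          (((Finset.univ : Finset (Fin (a * k))).powersetCard k).card : ℝ) ^ 2) := by
  obtain ⟨hε0, hε1⟩ := hε
  have hcard : (((Finset.univ : Finset (Fin (a*k))).powersetCard k).card : ℝ)
      = (((a*k).choose k : ℕ) : ℝ) := by
    rw [Finset.card_powersetCard, card_univ, Fintype.card_fin]
  constructor
  · rw [hcard]
    refine (upper_tail a k ha hk ε hε0 hε1).trans ?_
    nlinarith [mul_nonneg (Real.exp_pos (-((k:ℝ) * ε ^ 2) / (3 * ↑a))).le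
      (sq_nonneg ((((a*k).choose k : ℕ)):ℝ))]
  · rcases eq_or_lt_of_le ha with h1 | h2
    · -- a = 1 : the filter is empty
      have ha1 : a = 1 := h1.symm
      subst ha1
      have hfilter : ((((Finset.univ : Finset (Fin (1 * k))).powersetCard k) ×ˢ
          ((Finset.univ : Finset (Fin (1 * k))).powersetCard k)).filter
          (fun p => ((p.1 ∩ p.2).card : ℝ) ≤ (1 - ε) * k / (1:ℕ))) = ∅ := by
        rw [Finset.filter_eq_empty_iff]
        intro p hp
        rw [Finset.mem_product] at hp
        have hcardfin : Fintype.card (Fin (1 * k)) = k := by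
          rw [Fintype.card_fin]; omega
        have h1' : p.1 = univ := by
          apply Finset.eq_univ_of_card
          rw [(Finset.mem_powersetCard.mp hp.1).2, hcardfin]
        have h2' : p.2 = univ := by
          apply Finset.eq_univ_of_card
          rw [(Finset.mem_powersetCard.mp hp.2).2, hcardfin]
        rw [h1', h2', Finset.inter_self, not_le, card_univ, hcardfin]
        have hk0 : (0:ℝ) < k := by exact_mod_cast hk
        push_cast
        rw [div_one]
        nlinarith
      rw [hfilter]
      simp only [Finset.card_empty, Nat.cast_zero]
      positivity
    · have ha2 : 2 ≤ a := h2
      rw [hcard]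
      refine (lower_tail a k ha2 hk ε hε0 hε1).trans ?_
      nlinarith [mul_nonneg (Real.exp_pos (-((k:ℝ) * ε ^ 2) / (2 * ↑a))).le
        (sq_nonneg ((((a*k).choose k : ℕ)):ℝ))]
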